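/- arXiv:cond-mat/0401540 — 5 statements merged into one kernel-verified Lean document; each statement's English description precedes it below -/
import Mathlib

section
/- Let f : ℝ → ℝ be an everywhere positive, differentiable probability density function on ℝ (f > 0 and ∫_ℝ f(x) dx = 1). Suppose that for every natural number n ≥ 1 and all x₁, ..., xₙ ∈ ℝ, the likelihood function L(θ) := ∏_{i=1}^n f(xᵢ − θ) attains its maximum over θ ∈ ℝ at θ* := (x₁ + ⋯ + xₙ)/n. Then there exists σ > 0 such that f(e) = (1/(√(2π) σ)) · exp(−e²/(2σ²)) for all e ∈ ℝ. -/
open MeasureTheory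

/-- **Gauss' law of error.** If an everywhere positive, differentiable probability
density `f` is such that, for every sample `x₁, …, xₙ`, the likelihood
`θ ↦ ∏ i, f (xᵢ - θ)` is maximized at the arithmetic mean, then `f` is a Gaussian density. -/
theorem gauss_law_of_error (f : ℝ → ℝ)
    (hf_pos : ∀ x, 0 < f x) (hf_diff : Differentiable ℝ f)
    (hf_norm : ∫ x, f x = 1)
    (hmax : ∀ n : ℕ, 1 ≤ n → ∀ x : Fin n → ℝ, ∀ θ : ℝ,
      (∏ i, f (x i - θ)) ≤ ∏ i, f (x i - (∑ i, x i) / n)) :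
    ∃ σ : ℝ, 0 < σ ∧ ∀ e : ℝ,
      f e = (1 / (Real.sqrt (2 * Real.pi) * σ)) * Real.exp (-e ^ 2 / (2 * σ ^ 2)) := by
  -- the score function φ = f'/f, the derivative of log ∘ f
  set φ : ℝ → ℝ := fun x => deriv f x / f x with hφ
  have hlog : ∀ x : ℝ, HasDerivAt (fun y => Real.log (f y)) (φ x) x := fun x =>
    ((hf_diff x).hasDerivAt).log (hf_pos x).ne'
  -- key: for any zero-sum sample, the scores sum to zero
  have key : ∀ (n : ℕ), 1 ≤ n → ∀ y : Fin n → ℝ, (∑ i, y i) = 0 →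
      ∑ i, φ (y i) = 0 := by
    intro n hn y hsum
    -- log-likelihood has a global max at θ = 0
    have hmax0 : IsLocalMax (fun θ => ∑ i, Real.log (f (y i - θ))) 0 := by
      have h1 : ∀ θ : ℝ, (∑ i, Real.log (f (y i - θ))) ≤
          ∑ i, Real.log (f (y i - 0)) := by
        intro θ
        have h2 := hmax n hn y θ
        rw [hsum] at h2
        simp only [zero_div] at h2
        have hp : (0 : ℝ) < ∏ i, f (y i - θ) :=
          Finset.prod_pos fun i _ => hf_pos _
        have hl := Real.log_le_log hp h2
        rw [Real.log_prod (fun i _ => (hf_pos _).ne'),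
          Real.log_prod (fun i _ => (hf_pos _).ne')] at hl
        exact hl
      have : IsMaxOn (fun θ => ∑ i, Real.log (f (y i - θ))) Set.univ 0 := by
        intro θ _
        exact h1 θ
      exact this.isLocalMax Filter.univ_mem
    have hder : HasDerivAt (fun θ : ℝ => ∑ i, Real.log (f (y i - θ)))
        (∑ i, -φ (y i - 0)) 0 := by
      apply HasDerivAt.fun_sum
      intro i _
      have hinner : HasDerivAt (fun θ : ℝ => y i - θ) (-1) 0 :=
        (hasDerivAt_id 0).const_sub (y i)
      have := (hlog (y i - 0)).comp 0 hinner
      simpa [mul_comm, Function.comp_def] using this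
    have h0 := hmax0.hasDerivAt_eq_zero hder
    have : ∑ i, -φ (y i) = 0 := by simpa using h0
    have := neg_eq_zero.mp (by simpa [Finset.sum_neg_distrib] using this)
    simpa using this
  -- Cauchy functional equation for φ
  have h0 : φ 0 = 0 := by
    have := key 1 le_rfl ![0] (by simp)
    simpa using this
  have hneg : ∀ a : ℝ, φ (-a) = -φ a := by
    intro a
    have := key 2 one_le_two ![a, -a] (by simp [Fin.sum_univ_two])
    rw [Fin.sum_univ_two] at this
    simp only [Matrix.cons_val_zero, Matrix.cons_val_one, Matrix.head_cons] at this
    linarith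
  have hadd : ∀ a b : ℝ, φ (a + b) = φ a + φ b := by
    intro a b
    have := key 3 (by norm_num) ![a, b, -(a + b)] (by
      rw [Fin.sum_univ_three]; simp)
    rw [Fin.sum_univ_three] at this
    simp only [Matrix.cons_val_zero, Matrix.cons_val_one, Matrix.head_cons,
      Matrix.cons_val_two, Matrix.tail_cons] at this
    have h2 := hneg (a + b)
    linarith
  -- φ is linear: symmetry trick using integration (no measurability needed)
  have hsymm : ∀ a b : ℝ,
      Real.log (f (a + b)) - Real.log (f a) - Real.log (f b) + Real.log (f 0)
        = a * φ b := by
    intro a b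
    set H : ℝ → ℝ := fun x => Real.log (f (x + b)) - Real.log (f x) - x * φ b
      with hH
    have hHd : ∀ x : ℝ, HasDerivAt H 0 x := by
      intro x
      have h1 : HasDerivAt (fun y : ℝ => Real.log (f (y + b))) (φ (x + b)) x := by
        have hinner : HasDerivAt (fun y : ℝ => y + b) 1 x :=
          (hasDerivAt_id x).add_const b
        have := (hlog (x + b)).comp x hinner
        simpa [Function.comp_def] using this
      have h2 : HasDerivAt (fun y : ℝ => y * φ b) (φ b) x := by
        simpa using (hasDerivAt_id x).mul_const (φ b)
      have := (h1.sub (hlog x)).sub h2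
      have heq : φ (x + b) - φ x - φ b = 0 := by
        rw [hadd x b]; ring
      rw [heq] at this
      exact this
    have hHdiff : Differentiable ℝ H := fun x => (hHd x).differentiableAt
    have hHderiv : ∀ x : ℝ, deriv H x = 0 := fun x => (hHd x).deriv
    have hconst := is_const_of_deriv_eq_zero hHdiff hHderiv a 0
    simp only [hH, zero_add, zero_mul, sub_zero] at hconst
    linarith
  have hlin : ∀ a : ℝ, φ a = a * φ 1 := by
    intro a
    have h1 := hsymm a 1
    have h2 := hsymm 1 a
    rw [add_comm (1:ℝ) a] at h2
    have : a * φ 1 = 1 * φ a := by linarith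
    linarith
  set c : ℝ := φ 1 with hc
  -- f x = f 0 * exp (c/2 * x²)
  have hform : ∀ x : ℝ, f x = f 0 * Real.exp (c / 2 * x ^ 2) := by
    have hK : ∀ x : ℝ, HasDerivAt (fun y : ℝ => Real.log (f y) - c / 2 * y ^ 2)
        0 x := by
      intro x
      have h2 : HasDerivAt (fun y : ℝ => c / 2 * y ^ 2) (c * x) x := by
        have h := (hasDerivAt_pow 2 x).const_mul (c / 2)
        norm_num at h
        exact h.congr_deriv (by ring)
      have := (hlog x).sub h2
      rw [show φ x - c * x = 0 by rw [hlin x]; ring] at this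
      exact this
    have hKdiff : Differentiable ℝ fun y : ℝ => Real.log (f y) - c / 2 * y ^ 2 :=
      fun x => (hK x).differentiableAt
    have hKderiv : ∀ x : ℝ, deriv (fun y : ℝ =>
        Real.log (f y) - c / 2 * y ^ 2) x = 0 := fun x => (hK x).deriv
    intro x
    have hconst := is_const_of_deriv_eq_zero hKdiff hKderiv x 0
    simp only [ne_eq, OfNat.ofNat_ne_zero, not_false_eq_true, zero_pow,
      mul_zero, sub_zero] at hconst
    have : Real.log (f x) = Real.log (f 0) + c / 2 * x ^ 2 := by linarith
    calc f x = Real.exp (Real.log (f x)) := (Real.exp_log (hf_pos x)).symm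
      _ = Real.exp (Real.log (f 0) + c / 2 * x ^ 2) := by rw [this]
      _ = f 0 * Real.exp (c / 2 * x ^ 2) := by
          rw [Real.exp_add, Real.exp_log (hf_pos 0)]
  -- f is integrable
  have hint : Integrable f := by
    by_contra h
    rw [integral_undef h] at hf_norm
    norm_num at hf_norm
  -- c < 0
  have hcneg : c < 0 := by
    by_contra h
    push_neg at h
    have hge : ∀ x : ℝ, f 0 ≤ f x := by
      intro x
      rw [hform x]
      have : (1 : ℝ) ≤ Real.exp (c / 2 * x ^ 2) :=
        Real.one_le_exp (by positivity)
      nlinarith [hf_pos 0]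
    have hconst : Integrable (fun _ : ℝ => f 0) := by
      apply hint.mono' aestronglyMeasurable_const
      filter_upwards with x
      rw [Real.norm_eq_abs, abs_of_pos (hf_pos 0)]
      exact hge x
    rw [integrable_const_iff] at hconst
    rcases hconst with h1 | h1
    · exact absurd h1 (hf_pos 0).ne'
    · exact measure_ne_top (volume : Measure ℝ) Set.univ (by simp [Real.volume_univ])
  -- normalization
  have hπ : (0 : ℝ) < Real.pi := Real.pi_pos
  have hb : (0 : ℝ) < -(c / 2) := by linarith
  have hgauss : ∫ x, f x = f 0 * Real.sqrt (Real.pi / -(c / 2)) := by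
    have : (fun x => f x) = fun x => f 0 * Real.exp (-(-(c / 2)) * x ^ 2) := by
      funext x
      rw [hform x]
      ring_nf
    rw [this, MeasureTheory.integral_const_mul, integral_gaussian]
  have hS : (0 : ℝ) < Real.sqrt (Real.pi / -(c / 2)) :=
    Real.sqrt_pos.mpr (by positivity)
  have hf0 : f 0 = 1 / Real.sqrt (Real.pi / -(c / 2)) := by
    rw [hgauss] at hf_norm
    rw [eq_div_iff hS.ne']
    exact hf_norm
  -- conclude with σ = 1/√(-c)
  refine ⟨(Real.sqrt (-c))⁻¹,
    inv_pos.mpr (Real.sqrt_pos.mpr (by linarith)), fun e => ?_⟩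
  have hsc : Real.sqrt (-c) ^ 2 = -c := Real.sq_sqrt (by linarith)
  have hscpos : (0 : ℝ) < Real.sqrt (-c) := Real.sqrt_pos.mpr (by linarith)
  have hσ2 : ((Real.sqrt (-c))⁻¹) ^ 2 = (-c)⁻¹ := by
    rw [inv_pow, hsc]
  rw [hform e, hf0]
  congr 1
  · -- constants agree
    congr 1
    rw [show Real.pi / -(c / 2) = 2 * Real.pi * (-c)⁻¹ by
      field_simp]
    rw [Real.sqrt_mul (by positivity), Real.sqrt_inv]
  · -- exponents agree
    congr 1
    rw [hσ2]
    field_simp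
end

section
/- Let n ≥ 3 be a natural number and let φ : ℝ → ℝ be differentiable. Suppose that for all e₁, ..., eₙ ∈ ℝ with e₁ + e₂ + ⋯ + eₙ = 0 one has φ(e₁) + φ(e₂) + ⋯ + φ(eₙ) = 0. Then there exists a constant a ∈ ℝ such that φ(e) = a·e for all e ∈ ℝ. -/
/-- If `φ : ℝ → ℝ` is differentiable and `∑ i, φ (eᵢ) = 0` whenever `∑ i, eᵢ = 0`
(for a fixed number `n ≥ 3` of summands), then `φ` is linear through the origin. -/
theorem linear_of_sum_zero (n : ℕ) (hn : 3 ≤ n) (φ : ℝ → ℝ)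
    (hφ : Differentiable ℝ φ)
    (h : ∀ e : Fin n → ℝ, (∑ i, e i) = 0 → (∑ i, φ (e i)) = 0) :
    ∃ a : ℝ, ∀ x : ℝ, φ x = a * x := by
  -- Step 1: φ 0 = 0
  have h0 : φ 0 = 0 := by
    have := h (fun _ => 0) (by simp)
    simp [Finset.sum_const] at this
    rcases this with h1 | h2
    · omega
    · exact h2
  -- Step 2: three-point relation
  have h3 : ∀ x y z : ℝ, x + y + z = 0 → φ x + φ y + φ z = 0 := by
    intro x y z hxyz
    set E : ℕ → ℝ := fun k => if k = 0 then x else if k = 1 then y else if k = 2 then z else 0 with hE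
    have key : ∀ f : ℝ → ℝ, f 0 = 0 → ∑ i : Fin n, f (E i.val) = f x + f y + f z := by
      intro f hf
      rw [Fin.sum_univ_eq_sum_range (fun k => f (E k))]
      rw [← Finset.sum_subset (Finset.range_subset_range.2 hn)]
      · simp [hE, Finset.sum_range_succ]
      · intro k _ hk
        simp only [Finset.mem_range, not_lt] at hk
        have hk0 : k ≠ 0 := by omega
        have hk1 : k ≠ 1 := by omega
        have hk2 : k ≠ 2 := by omega
        have : E k = 0 := by simp [hE, hk0, hk1, hk2]
        rw [this, hf]
    have hsum : ∑ i : Fin n, E i.val = 0 := by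
      have := key id rfl
      simpa [hxyz] using this
    have := h (fun i => E i.val) hsum
    rw [key φ h0] at this
    exact this
  -- Step 3: oddness and additivity
  have hodd : ∀ x : ℝ, φ (-x) = -φ x := by
    intro x
    have := h3 x (-x) 0 (by ring)
    rw [h0] at this; linarith
  have hadd : ∀ x y : ℝ, φ (x + y) = φ x + φ y := by
    intro x y
    have := h3 x y (-(x + y)) (by ring)
    rw [hodd (x + y)] at this; linarith
  -- Step 4: deriv φ is constant
  set a := deriv φ 0 with ha
  have hderiv : ∀ x : ℝ, deriv φ x = a := by
    intro x
    have h1 : deriv (fun y => φ (x + y)) 0 = deriv φ x := by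
      have : HasDerivAt (fun y => φ (x + y)) (deriv φ x) 0 := by
        have := ((hφ (x + 0)).hasDerivAt).comp 0
          ((hasDerivAt_id (0:ℝ)).const_add x)
        simpa [Function.comp_def] using this
      exact this.deriv
    have h2 : deriv (fun y => φ (x + y)) 0 = a := by
      have heq : (fun y => φ (x + y)) = fun y => φ x + φ y := by
        funext y; exact hadd x y
      rw [heq]
      simp [ha, deriv_const_add]
    rw [← h1, h2]
  refine ⟨a, fun x => ?_⟩
  have hψ : Differentiable ℝ (fun x => φ x - a * x) :=
    hφ.sub ((differentiable_id.const_mul a))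
  have hder0 : ∀ x, deriv (fun x => φ x - a * x) x = 0 := by
    intro x
    rw [deriv_fun_sub (hφ x) (g := fun y : ℝ => a * y) ((differentiable_id.const_mul a) x)]
    have hma : deriv (fun y : ℝ => a * y) x = a := by
      simpa using ((hasDerivAt_id x).const_mul a).deriv
    rw [hderiv x, hma, sub_self]
  have hc := is_const_of_deriv_eq_zero hψ hder0 x 0
  simp [h0] at hc
  linarith
end

section
/- For all real numbers x > 0 and y > 0, the q-product x ⊗_q y tends to the ordinary product x·y as q → 1 (with q ranging over positive reals different from 1). -/
open Filter

/-- The `q`-product: `x ⊗_q y = (x^(1-q) + y^(1-q) - 1)^(1/(1-q))` when `x > 0`, `y > 0`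
and `x^(1-q) + y^(1-q) - 1 > 0`, else `0`. -/
noncomputable def qmul (q x y : ℝ) : ℝ :=
  if 0 < x ∧ 0 < y ∧ 0 < x ^ (1 - q) + y ^ (1 - q) - 1 then
    (x ^ (1 - q) + y ^ (1 - q) - 1) ^ (1 / (1 - q))
  else 0

/-- For `x, y > 0`, the `q`-product `x ⊗_q y` tends to the ordinary product `x * y`
as `q → 1` along positive reals different from `1`. -/
theorem qmul_tendsto_mul (x y : ℝ) (hx : 0 < x) (hy : 0 < y) :
    Tendsto (fun q : ℝ => qmul q x y) (nhdsWithin 1 {q : ℝ | 0 < q ∧ q ≠ 1})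
      (nhds (x * y)) := by
  set g : ℝ → ℝ := fun t => x ^ t + y ^ t - 1 with hgdef
  have hg0 : g 0 = 1 := by simp [g]
  have hG : HasDerivAt g (Real.log x + Real.log y) 0 := by
    have h1 : HasDerivAt (fun t : ℝ => x ^ t) (x ^ (0:ℝ) * Real.log x) 0 :=
      (Real.hasStrictDerivAt_const_rpow hx 0).hasDerivAt
    have h2 : HasDerivAt (fun t : ℝ => y ^ t) (y ^ (0:ℝ) * Real.log y) 0 :=
      (Real.hasStrictDerivAt_const_rpow hy 0).hasDerivAt
    simpa [g] using (h1.add h2).sub_const 1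
  have hf : HasDerivAt (fun t => Real.log (g t)) (Real.log x + Real.log y) 0 := by
    have := hG.log (by rw [hg0]; norm_num)
    simpa [hg0] using this
  have hslope : Tendsto (fun t : ℝ => Real.log (g t) / t) (nhdsWithin 0 {0}ᶜ)
      (nhds (Real.log x + Real.log y)) := by
    have h := hasDerivAt_iff_tendsto_slope.mp hf
    refine h.congr' ?_
    filter_upwards [self_mem_nhdsWithin] with t ht
    simp [slope, hg0, div_eq_inv_mul]
  have hmap : Tendsto (fun q : ℝ => 1 - q) (nhdsWithin 1 {q : ℝ | 0 < q ∧ q ≠ 1})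
      (nhdsWithin 0 {0}ᶜ) := by
    apply tendsto_nhdsWithin_of_tendsto_nhds_of_eventually_within
    · have h : Tendsto (fun q : ℝ => 1 - q) (nhds 1) (nhds (1 - 1)) :=
        ((continuous_const.sub continuous_id).tendsto 1)
      rw [sub_self] at h
      exact h.mono_left nhdsWithin_le_nhds
    · filter_upwards [self_mem_nhdsWithin] with q hq
      simp only [Set.mem_compl_iff, Set.mem_singleton_iff, sub_eq_zero]
      exact fun h => hq.2 h.symm
  have hlog : Tendsto (fun q : ℝ => Real.log (g (1 - q)) / (1 - q))
      (nhdsWithin 1 {q : ℝ | 0 < q ∧ q ≠ 1}) (nhds (Real.log x + Real.log y)) :=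
    hslope.comp hmap
  have hexp := (Real.continuous_exp.tendsto _).comp hlog
  rw [show Real.exp (Real.log x + Real.log y) = x * y by
    rw [Real.exp_add, Real.exp_log hx, Real.exp_log hy]] at hexp
  have hcont : Tendsto (fun q : ℝ => g (1 - q)) (nhds 1) (nhds 1) := by
    have h1 : ContinuousAt (fun q : ℝ => 1 - q) 1 := by fun_prop
    have h0 : ContinuousAt g ((fun q : ℝ => 1 - q) 1) := by
      simp only [sub_self]; exact hG.continuousAt
    have := h0.comp h1
    simpa [hg0, ContinuousAt, Function.comp_def] using this
  have hev : ∀ᶠ q in nhdsWithin 1 {q : ℝ | 0 < q ∧ q ≠ 1}, 0 < g (1 - q) :=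
    (hcont.eventually (eventually_gt_nhds one_pos)).filter_mono nhdsWithin_le_nhds
  refine hexp.congr' ?_
  filter_upwards [hev, self_mem_nhdsWithin] with q hq hq'
  have hqpos : (0:ℝ) < x ^ (1 - q) + y ^ (1 - q) - 1 := hq
  simp only [Function.comp_apply, qmul]
  rw [if_pos ⟨hx, hy, hqpos⟩, Real.rpow_def_of_pos hqpos, one_div, div_eq_mul_inv]
end

section
/- Fix q > 1 and β > 0, and suppose Z := ∫_ℝ exp_q(−β u²) du is finite and positive. Define f(e) := exp_q(−β e²)/Z, which is positive for all e ∈ ℝ. Then for every n ≥ 1 and all x₁, ..., xₙ ∈ ℝ, the function g(θ) := Σ_{i=1}^n ln_q f(xᵢ − θ) is twice differentiable in θ and g″(θ) = −2 n β Z^{q−1} < 0 for all θ ∈ ℝ. -/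
open MeasureTheory

/-- The `q`-exponential: `exp_q x = (1 + (1-q)x)^(1/(1-q))` if `1 + (1-q)x > 0`, else `0`. -/
noncomputable def qexp (q x : ℝ) : ℝ :=
  if 0 < 1 + (1 - q) * x then (1 + (1 - q) * x) ^ (1 / (1 - q)) else 0

/-- The `q`-logarithm: `ln_q x = (x^(1-q) - 1)/(1-q)`. -/
noncomputable def qlog (q x : ℝ) : ℝ := (x ^ (1 - q) - 1) / (1 - q)

/-- For the `q`-Gaussian density `f e = exp_q (-β e²) / Z` with `q > 1`, `β > 0` and
`Z := ∫ exp_q (-β u²) du` finite and positive, the `q`-log-likelihood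
`g θ = ∑ i, ln_q (f (xᵢ - θ))` is twice differentiable with constant negative second
derivative `g'' θ = -2 n β Z^(q-1) < 0`. -/
theorem qloglikelihood_second_deriv (q β : ℝ) (hq : 1 < q) (hβ : 0 < β)
    (hint : Integrable (fun u : ℝ => qexp q (-β * u ^ 2)))
    (hZpos : 0 < ∫ u : ℝ, qexp q (-β * u ^ 2))
    (n : ℕ) (hn : 1 ≤ n) (x : Fin n → ℝ) :
    (∀ θ : ℝ, DifferentiableAt ℝ
      (fun θ : ℝ => ∑ i, qlog q (qexp q (-β * (x i - θ) ^ 2) / ∫ u : ℝ, qexp q (-β * u ^ 2))) θ) ∧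
    (∀ θ : ℝ, HasDerivAt
      (deriv (fun θ : ℝ =>
        ∑ i, qlog q (qexp q (-β * (x i - θ) ^ 2) / ∫ u : ℝ, qexp q (-β * u ^ 2))))
      (-2 * n * β * (∫ u : ℝ, qexp q (-β * u ^ 2)) ^ (q - 1)) θ) ∧
    -2 * n * β * (∫ u : ℝ, qexp q (-β * u ^ 2)) ^ (q - 1) < 0 := by
  set Z := ∫ u : ℝ, qexp q (-β * u ^ 2) with hZdef
  have hq1 : (1 : ℝ) - q ≠ 0 := by linarith
  have hZq : (0:ℝ) < Z ^ (q - 1) := Real.rpow_pos_of_pos hZpos _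
  set c : ℝ := (Z ^ (q - 1) - 1) / (1 - q) with hc
  set K : ℝ := β * Z ^ (q - 1) with hK
  -- pointwise simplification of the q-log-likelihood
  have key : ∀ e : ℝ, qlog q (qexp q (-β * e ^ 2) / Z) = c - K * e ^ 2 := by
    intro e
    have ht : (0:ℝ) < 1 + (q - 1) * β * e ^ 2 := by
      have := mul_nonneg (mul_nonneg (by linarith : (0:ℝ) ≤ q - 1) hβ.le) (sq_nonneg e)
      linarith
    have h1 : 1 + (1 - q) * (-β * e ^ 2) = 1 + (q - 1) * β * e ^ 2 := by ring
    have hqe : qexp q (-β * e ^ 2) = (1 + (q - 1) * β * e ^ 2) ^ (1 / (1 - q)) := by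
      rw [qexp, h1, if_pos ht]
    rw [hqe, qlog]
    rw [Real.div_rpow (Real.rpow_nonneg ht.le _) hZpos.le,
      ← Real.rpow_mul ht.le, one_div_mul_cancel hq1, Real.rpow_one]
    have hZne : Z ^ (1 - q) ≠ 0 := (Real.rpow_pos_of_pos hZpos _).ne'
    have hZinv : Z ^ (q - 1) = (Z ^ (1 - q))⁻¹ := by
      rw [← Real.rpow_neg hZpos.le, neg_sub]
    rw [hc, hK, hZinv]
    field_simp
    ring
  have hfun : (fun θ : ℝ => ∑ i, qlog q (qexp q (-β * (x i - θ) ^ 2) / Z))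
      = fun θ : ℝ => ∑ i, (c - K * (x i - θ) ^ 2) := by
    funext θ; exact Finset.sum_congr rfl fun i _ => key _
  -- first derivative
  have hd : ∀ θ : ℝ, HasDerivAt (fun θ : ℝ => ∑ i, (c - K * (x i - θ) ^ 2))
      (∑ i, 2 * K * (x i - θ)) θ := by
    intro θ
    apply HasDerivAt.fun_sum
    intro i _
    have h1 : HasDerivAt (fun θ : ℝ => x i - θ) (-1) θ := by
      simpa using (hasDerivAt_id θ).const_sub (x i)
    have h2 := (h1.fun_pow 2).const_mul K
    have h3 := h2.const_sub c
    convert h3 using 1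
    push_cast
    ring
  have hderiv : deriv (fun θ : ℝ => ∑ i, (c - K * (x i - θ) ^ 2))
      = fun θ : ℝ => ∑ i, 2 * K * (x i - θ) := by
    funext θ; exact (hd θ).deriv
  refine ⟨?_, ?_, ?_⟩
  · intro θ
    rw [hfun]
    exact (hd θ).differentiableAt
  · intro θ
    rw [hfun, hderiv]
    have hd2 : HasDerivAt (fun θ : ℝ => ∑ i, 2 * K * (x i - θ)) (∑ _i : Fin n, -(2 * K)) θ := by
      apply HasDerivAt.fun_sum
      intro i _
      have h1 : HasDerivAt (fun θ : ℝ => x i - θ) (-1) θ := by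
        simpa using (hasDerivAt_id θ).const_sub (x i)
      simpa using h1.const_mul (2 * K)
    convert hd2 using 1
    simp [hK, Finset.sum_const, Finset.card_univ]
    ring
  · have hn' : (0:ℝ) < n := by exact_mod_cast hn
    have : 0 < 2 * (n:ℝ) * β * Z ^ (q - 1) := by positivity
    linarith
end

section
/- Fix q > 1 and β > 0, and suppose Z := ∫_ℝ exp_q(−β u²) du is finite and positive. Define f(e) := exp_q(−β e²)/Z. Then for every n ≥ 1 and all x₁, ..., xₙ ∈ ℝ, the q-log-likelihood g(θ) := Σ_{i=1}^n ln_q f(xᵢ − θ) attains its unique maximum over θ ∈ ℝ at θ* = (x₁ + ⋯ + xₙ)/n; that is, g(θ) < g(θ*) for all θ ≠ θ*. -/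
open MeasureTheory

/-- Converse direction of the law of error in Tsallis statistics: for the `q`-Gaussian
density `f e = exp_q (-β e²) / Z` with `q > 1`, `β > 0` and `Z := ∫ exp_q (-β u²) du`
finite and positive, the `q`-log-likelihood `g θ = ∑ i, ln_q (f (xᵢ - θ))` attains its
unique maximum at the arithmetic mean `θ* = (x₁ + ⋯ + xₙ)/n`. -/
theorem tsallis_mle_mean (q β : ℝ) (hq : 1 < q) (hβ : 0 < β)
    (hint : Integrable (fun u : ℝ => qexp q (-β * u ^ 2)))
    (hZpos : 0 < ∫ u : ℝ, qexp q (-β * u ^ 2))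
    (n : ℕ) (hn : 1 ≤ n) (x : Fin n → ℝ) (f : ℝ → ℝ)
    (hf : ∀ e : ℝ, f e = qexp q (-β * e ^ 2) / ∫ u : ℝ, qexp q (-β * u ^ 2)) :
    ∀ θ : ℝ, θ ≠ (∑ i, x i) / n →
      (∑ i, qlog q (f (x i - θ))) < ∑ i, qlog q (f (x i - (∑ i, x i) / n)) := by
  intro θ hθ
  set Z : ℝ := ∫ u : ℝ, qexp q (-β * u ^ 2) with hZ
  have hq1 : (1 : ℝ) - q ≠ 0 := by linarith
  have hpos : ∀ e : ℝ, 0 < 1 + (1 - q) * (-β * e ^ 2) := by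
    intro e
    nlinarith [sq_nonneg e, mul_nonneg hβ.le (sq_nonneg e)]
  set C : ℝ := (Z ^ (q - 1) - 1) / (1 - q) with hC
  set c : ℝ := β * Z ^ (q - 1) with hc
  have hcpos : 0 < c := by
    apply mul_pos hβ (Real.rpow_pos_of_pos hZpos _)
  have hln : ∀ e : ℝ, qlog q (f e) = C - c * e ^ 2 := by
    intro e
    rw [hf, qlog]
    have hqe : qexp q (-β * e ^ 2) = (1 + (1 - q) * (-β * e ^ 2)) ^ (1 / (1 - q)) := by
      rw [qexp, if_pos (hpos e)]
    rw [hqe]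
    have h0 : (0 : ℝ) ≤ 1 + (1 - q) * (-β * e ^ 2) := (hpos e).le
    have h1 : ((1 + (1 - q) * (-β * e ^ 2)) ^ (1 / (1 - q)) / Z) ^ (1 - q)
        = (1 + (1 - q) * (-β * e ^ 2)) * Z ^ (q - 1) := by
      rw [Real.div_rpow (Real.rpow_nonneg h0 _) hZpos.le]
      rw [← Real.rpow_mul h0]
      rw [one_div_mul_cancel hq1, Real.rpow_one]
      rw [div_eq_mul_inv, ← Real.rpow_neg hZpos.le]
      norm_num
    rw [h1, hC, hc]
    field_simp
    ring
  simp only [hln]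
  set m : ℝ := (∑ i, x i) / n with hm
  have hn0 : (n : ℝ) ≠ 0 := by
    have : 0 < n := hn
    positivity
  have hsum0 : (∑ i, (x i - m)) = 0 := by
    rw [Finset.sum_sub_distrib, Finset.sum_const, Finset.card_univ, Fintype.card_fin,
      nsmul_eq_mul, hm]
    field_simp
    ring
  have key : (∑ i, (x i - θ) ^ 2) = (∑ i, (x i - m) ^ 2) + n * (m - θ) ^ 2 := by
    have h2 : ∀ i, (x i - θ) ^ 2
        = (x i - m) ^ 2 + (2 * (m - θ)) * (x i - m) + (m - θ) ^ 2 := by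
      intro i; ring
    calc (∑ i, (x i - θ) ^ 2)
        = ∑ i, ((x i - m) ^ 2 + (2 * (m - θ)) * (x i - m) + (m - θ) ^ 2) :=
          Finset.sum_congr rfl fun i _ => h2 i
      _ = (∑ i, (x i - m) ^ 2) + (2 * (m - θ)) * (∑ i, (x i - m)) + n * (m - θ) ^ 2 := by
          rw [Finset.sum_add_distrib, Finset.sum_add_distrib, ← Finset.mul_sum,
            Finset.sum_const, Finset.card_univ, Fintype.card_fin, nsmul_eq_mul]
      _ = (∑ i, (x i - m) ^ 2) + n * (m - θ) ^ 2 := by rw [hsum0]; ring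
  have hlt : (∑ i, (x i - m) ^ 2) < ∑ i, (x i - θ) ^ 2 := by
    rw [key]
    have hmθ : (0 : ℝ) < (m - θ) ^ 2 := by
      have : m - θ ≠ 0 := fun h => hθ (by linarith [sub_eq_zero.mp h])
      positivity
    have hnpos : (0 : ℝ) < n := by positivity
    nlinarith
  have e1 : (∑ i, (C - c * (x i - θ) ^ 2)) = n * C - c * ∑ i, (x i - θ) ^ 2 := by
    rw [Finset.sum_sub_distrib, Finset.sum_const, Finset.card_univ, Fintype.card_fin,
      nsmul_eq_mul, Finset.mul_sum]
  have e2 : (∑ i, (C - c * (x i - m) ^ 2)) = n * C - c * ∑ i, (x i - m) ^ 2 := by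
    rw [Finset.sum_sub_distrib, Finset.sum_const, Finset.card_univ, Fintype.card_fin,
      nsmul_eq_mul, Finset.mul_sum]
  rw [e1, e2]
  have := mul_lt_mul_of_pos_left hlt hcpos
  linarith
end
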